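/- Lemma B.2 (strict resource monotonicity for weakly MNW allocations): Fix a profile (f_1,…,f_n) of piecewise constant value density functions on [0,1], and let I be a positive-measure subset of a single interval X_t of the fixed partition on which all densities are constant, with f_1 strictly positive on I. Suppose A = (A_1,…,A_n) is a weakly MNW allocation on the cake [0,1] − I, and suppose f_1(I)/v_1(A_1) ≥ f_j(I)/v_j(A_j) for all agents j ∈ {1,…,n} (where f_i(I) denotes the constant value of f_i on I). Then there exists a weakly MNW allocation A⁺ on the cake [0,1] such that v_1(A_1) < v_1(A_1⁺) and v_i(A_i) ≤ v_i(A_i⁺) for all i ∈ {2,…,n}. -/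

import Mathlib

open MeasureTheory Set

noncomputable def cakeval (f : ℝ → ℝ) (S : Set ℝ) : ℝ := ∫ x in S, f x

def PiecewiseConstant (f : ℝ → ℝ) : Prop :=
  ∃ (m : ℕ) (a : Fin (m + 1) → ℝ) (c : Fin m → ℝ),
    a 0 = 0 ∧ a (Fin.last m) = 1 ∧ Monotone a ∧
    ∀ t : Fin m, ∀ x ∈ Set.Ico (a t.castSucc) (a t.succ), f x = c t

def ValidDensity (f : ℝ → ℝ) : Prop :=
  PiecewiseConstant f ∧ (∀ x, 0 ≤ f x) ∧ 0 < cakeval f (Set.Icc 0 1)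

def FinUnionIcc (S : Set ℝ) : Prop :=
  ∃ (k : ℕ) (a b : Fin k → ℝ), S = ⋃ j, Set.Icc (a j) (b j)

def IsAllocOn {n : ℕ} (C : Set ℝ) (A : Fin n → Set ℝ) : Prop :=
  (∀ i, A i ⊆ C) ∧ (∀ i, FinUnionIcc (A i)) ∧
    Pairwise fun i j => volume (A i ∩ A j) = 0

def IsAlloc {n : ℕ} (A : Fin n → Set ℝ) : Prop := IsAllocOn (Set.Icc 0 1) A

def CompleteAlloc {n : ℕ} (A : Fin n → Set ℝ) : Prop := (⋃ i, A i) = Set.Icc (0 : ℝ) 1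

noncomputable def nashProd {n : ℕ} (f : Fin n → ℝ → ℝ) (A : Fin n → Set ℝ) : ℝ :=
  ∏ i, cakeval (f i) (A i)

def IsMNWOn {n : ℕ} (C : Set ℝ) (f : Fin n → ℝ → ℝ) (A : Fin n → Set ℝ) : Prop :=
  IsAllocOn C A ∧ ∀ B : Fin n → Set ℝ, IsAllocOn C B → nashProd f B ≤ nashProd f A

def IsMNW {n : ℕ} (f : Fin n → ℝ → ℝ) (A : Fin n → Set ℝ) : Prop :=
  IsMNWOn (Set.Icc 0 1) f A

def IsCompleteMNW {n : ℕ} (f : Fin n → ℝ → ℝ) (A : Fin n → Set ℝ) : Prop :=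
  IsAlloc A ∧ CompleteAlloc A ∧
    ∀ B : Fin n → Set ℝ, IsAlloc B → CompleteAlloc B → nashProd f B ≤ nashProd f A

/-- A system of partition points `a 0 = 0 ≤ a 1 ≤ … ≤ a m = 1` of the cake `[0,1]`. -/
def IsPartitionPts (m : ℕ) (a : Fin (m + 1) → ℝ) : Prop :=
  a 0 = 0 ∧ a (Fin.last m) = 1 ∧ Monotone a

/-- The `t`-th cell of the partition given by the points `a`. -/
def cell {m : ℕ} (a : Fin (m + 1) → ℝ) (t : Fin m) : Set ℝ :=
  Set.Ico (a t.castSucc) (a t.succ)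

/-- All the densities `f i` are constant on each cell of the partition, with
constant value `F i t` on cell `t`. -/
def ConstOnCells {n m : ℕ} (f : Fin n → ℝ → ℝ) (a : Fin (m + 1) → ℝ)
    (F : Fin n → Fin m → ℝ) : Prop :=
  ∀ i t, ∀ x ∈ cell a t, f i x = F i t

/-- Weakly MNW allocation on the cake `C`: every agent gets positive value, and for
every cell `X_t` and every agent `i` whose piece meets `X_t` in positive measure,
`f_i(X_t)/v_i(A_i) ≥ f_j(X_t)/v_j(A_j)` for every agent `j` other than agent 1
(agent 1 being index `0`). -/
def WeaklyMNWOn {n m : ℕ} (C : Set ℝ) (f : Fin (n + 1) → ℝ → ℝ) (a : Fin (m + 1) → ℝ)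
    (F : Fin (n + 1) → Fin m → ℝ) (A : Fin (n + 1) → Set ℝ) : Prop :=
  IsAllocOn C A ∧ (∀ i, 0 < cakeval (f i) (A i)) ∧
    ∀ (t : Fin m) (i : Fin (n + 1)), 0 < volume (A i ∩ cell a t) →
      ∀ j : Fin (n + 1), j ≠ 0 →
        F j t / cakeval (f j) (A j) ≤ F i t / cakeval (f i) (A i)


namespace B2

lemma vol_subsingleton {S : Set ℝ} (h : ∃ x : ℝ, S ⊆ {x}) : volume S = 0 := by
  obtain ⟨x, hx⟩ := h
  exact measure_mono_null hx (measure_singleton x)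

lemma finUnionIcc_measurable {S : Set ℝ} (h : FinUnionIcc S) : MeasurableSet S := by
  obtain ⟨k, c, d, rfl⟩ := h
  exact MeasurableSet.iUnion fun j => measurableSet_Icc

variable {m : ℕ} {a : Fin (m + 1) → ℝ}

lemma succ_le_castSucc (hm : Monotone a) {s s' : Fin m} (h : s < s') :
    a s.succ ≤ a s'.castSucc := by
  apply hm
  rw [Fin.le_def]
  simp only [Fin.val_succ, Fin.coe_castSucc]
  exact Fin.lt_def.mp h

lemma cell_subset_Icc (hm : Monotone a) (s : Fin m) :
    cell a s ⊆ Set.Icc (a 0) (a (Fin.last m)) := by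
  intro x hx
  exact ⟨le_trans (hm (Fin.zero_le _)) hx.1, le_trans (le_of_lt hx.2) (hm (Fin.le_last _))⟩

lemma cellIcc_subset_Icc (hm : Monotone a) (s : Fin m) :
    Set.Icc (a s.castSucc) (a s.succ) ⊆ Set.Icc (a 0) (a (Fin.last m)) :=
  Set.Icc_subset_Icc (hm (Fin.zero_le _)) (hm (Fin.le_last _))

lemma cell_disjoint (hm : Monotone a) {s s' : Fin m} (h : s ≠ s') :
    cell a s ∩ cell a s' = ∅ := by
  ext x
  simp only [Set.mem_inter_iff, Set.mem_empty_iff_false, iff_false, not_and]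
  intro hx hx'
  rcases lt_or_gt_of_ne h with hlt | hgt
  · have := succ_le_castSucc hm hlt
    have h1 := hx.2
    have h2 := hx'.1
    exact absurd (lt_of_lt_of_le h1 (le_trans this h2)) (lt_irrefl x)
  · have := succ_le_castSucc hm hgt
    have h1 := hx'.2
    have h2 := hx.1
    exact absurd (lt_of_lt_of_le h1 (le_trans this h2)) (lt_irrefl x)

/-- if `P` lives in the closed version of cell `s`, it meets any other cell in a null set -/
lemma vol_inter_cell_eq_zero (hm : Monotone a) {s s' : Fin m} (h : s ≠ s')
    {P : Set ℝ} (hP : P ⊆ Set.Icc (a s.castSucc) (a s.succ)) :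
    volume (P ∩ cell a s') = 0 := by
  rcases lt_or_gt_of_ne h with hlt | hgt
  · apply vol_subsingleton
    refine ⟨a s'.castSucc, fun x hx => ?_⟩
    have h1 : x ≤ a s.succ := (hP hx.1).2
    have h2 : a s'.castSucc ≤ x := hx.2.1
    have := succ_le_castSucc hm hlt
    simp only [Set.mem_singleton_iff]
    linarith
  · apply vol_subsingleton
    refine ⟨0, fun x hx => ?_⟩
    exfalso
    have h1 : a s.castSucc ≤ x := (hP hx.1).1
    have h2 : x < a s'.succ := hx.2.2
    have := succ_le_castSucc hm hgt
    linarith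

lemma exists_cell (hm : Monotone a) {x : ℝ}
    (hx : x ∈ Set.Ico (a 0) (a (Fin.last m))) : ∃ s : Fin m, x ∈ cell a s := by
  classical
  set T : Finset (Fin (m + 1)) := Finset.univ.filter (fun s => a s ≤ x) with hT
  have h0 : (0 : Fin (m + 1)) ∈ T := by simp [hT, hx.1]
  have hTne : T.Nonempty := ⟨0, h0⟩
  set s0 := T.max' hTne with hs0
  have hs0mem : s0 ∈ T := T.max'_mem hTne
  have hs0le : a s0 ≤ x := by simpa [hT] using hs0mem
  have hs0ne : s0 ≠ Fin.last m := by
    intro hcon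
    rw [hcon] at hs0le
    exact absurd hs0le (not_le.2 hx.2)
  have hlt : (s0 : ℕ) < m := by
    have := Fin.le_last s0
    rcases lt_or_eq_of_le this with h | h
    · simpa [Fin.lt_def, Fin.last] using h
    · exact absurd (Fin.ext (by simpa [Fin.last] using congrArg Fin.val h)) hs0ne
  refine ⟨⟨(s0 : ℕ), hlt⟩, ?_, ?_⟩
  · have : (⟨(s0 : ℕ), hlt⟩ : Fin m).castSucc = s0 := by
      ext; simp
    rw [this]; exact hs0le
  · by_contra hcon
    push_neg at hcon
    have hmem : (⟨(s0 : ℕ), hlt⟩ : Fin m).succ ∈ T := by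
      rw [hT]
      refine Finset.mem_filter.2 ⟨Finset.mem_univ _, ?_⟩
      convert hcon using 2
    have hle := T.le_max' _ hmem
    rw [← hs0] at hle
    have : s0 < (⟨(s0 : ℕ), hlt⟩ : Fin m).succ := by
      rw [Fin.lt_def]; simp
    exact absurd hle (not_le.2 this)


variable {f : ℝ → ℝ} {Fi : Fin m → ℝ}

/-- a density which is constant on cells is integrable on [0,1] -/
lemma integrableOn_of_const (h0 : a 0 = 0) (h1 : a (Fin.last m) = 1) (hm : Monotone a)
    (hc : ∀ s : Fin m, ∀ x ∈ cell a s, f x = Fi s) :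
    IntegrableOn f (Set.Icc 0 1) volume := by
  classical
  set g : ℝ → ℝ := fun x => ∑ s : Fin m, (cell a s).indicator (fun _ => Fi s) x with hg
  have hgint : IntegrableOn g (Set.Icc 0 1) volume := by
    apply MeasureTheory.integrable_finset_sum
    intro s _
    rw [show cell a s = Set.Ico (a s.castSucc) (a s.succ) from rfl,
      integrable_indicator_iff measurableSet_Ico]
    refine integrableOn_const (ne_of_lt ?_)
    calc (volume.restrict (Set.Icc (0:ℝ) 1)) (cell a s) ≤ volume (cell a s) :=
          Measure.restrict_le_self _
    _ < ⊤ := by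
          rw [cell]; rw [Real.volume_Ico]; exact ENNReal.ofReal_lt_top
  apply hgint.congr
  rw [Filter.eventuallyEq_comm]
  show f =ᵐ[volume.restrict (Set.Icc 0 1)] g
  rw [Filter.EventuallyEq, MeasureTheory.ae_restrict_iff' measurableSet_Icc]
  show ∀ᵐ x ∂volume, x ∈ Set.Icc (0:ℝ) 1 → f x = g x
  rw [MeasureTheory.ae_iff]
  have hsub : {x : ℝ | ¬ (x ∈ Set.Icc (0:ℝ) 1 → f x = g x)} ⊆ {(1 : ℝ)} := by
    intro x hx
    simp only [Set.mem_setOf_eq, Classical.not_imp] at hx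
    obtain ⟨hxI, hxne⟩ := hx
    by_contra hx1
    have hxIco : x ∈ Set.Ico (a 0) (a (Fin.last m)) := by
      rw [h0, h1]
      refine ⟨hxI.1, lt_of_le_of_ne hxI.2 ?_⟩
      simpa using hx1
    obtain ⟨s, hs⟩ := exists_cell hm hxIco
    apply hxne
    have hgx : g x = Fi s := by
      show (∑ s' : Fin m, (cell a s').indicator (fun _ => Fi s') x) = Fi s
      rw [Finset.sum_eq_single s]
      · simp [Set.indicator_of_mem hs]
      · intro b _ hbs
        apply Set.indicator_of_notMem
        intro hmem
        have hcd := cell_disjoint hm hbs (a := a)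
        rw [Set.eq_empty_iff_forall_notMem] at hcd
        exact hcd x ⟨hmem, hs⟩
      · simp
    rw [hc s x hs, hgx]
  exact measure_mono_null hsub (measure_singleton 1)

/-- integral of f over a subset of the closed cell s -/
lemma cakeval_subset_cell {s : Fin m} (hc : ∀ x ∈ cell a s, f x = Fi s)
    {S : Set ℝ} (hS : MeasurableSet S) (hsub : S ⊆ Set.Icc (a s.castSucc) (a s.succ)) :
    cakeval f S = Fi s * (volume S).toReal := by
  rw [cakeval]
  rw [MeasureTheory.setIntegral_congr_ae hS (g := fun _ => Fi s) ?_]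
  · rw [MeasureTheory.setIntegral_const, smul_eq_mul, mul_comm]; rfl
  · have hsub2 : {x : ℝ | ¬ (x ∈ S → f x = Fi s)} ⊆ {a s.succ} := by
      intro x hx
      simp only [Set.mem_setOf_eq, Classical.not_imp] at hx
      obtain ⟨hxS, hxne⟩ := hx
      by_contra hx1
      apply hxne
      apply hc
      refine ⟨(hsub hxS).1, lt_of_le_of_ne (hsub hxS).2 ?_⟩
      simpa using hx1
    exact measure_mono_null hsub2 (measure_singleton _)

/-- decomposition of value over cells -/
lemma cakeval_decomp (h0 : a 0 = 0) (h1 : a (Fin.last m) = 1) (hm : Monotone a)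
    (hc : ∀ s : Fin m, ∀ x ∈ cell a s, f x = Fi s)
    {S : Set ℝ} (hS : MeasurableSet S) (hsub : S ⊆ Set.Icc 0 1) :
    cakeval f S = ∑ s : Fin m, Fi s * (volume (S ∩ cell a s)).toReal := by
  classical
  have hint : IntegrableOn f S volume :=
    (integrableOn_of_const h0 h1 hm hc).mono_set hsub
  have hae : S =ᵐ[volume] ⋃ s : Fin m, S ∩ cell a s := by
    rw [MeasureTheory.ae_eq_set]
    constructor
    · apply measure_mono_null ?_ (measure_singleton (1:ℝ))
      intro x hx
      obtain ⟨hxS, hxn⟩ := hx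
      simp only [Set.mem_iUnion, not_exists] at hxn
      by_contra hx1
      have hxIco : x ∈ Set.Ico (a 0) (a (Fin.last m)) := by
        rw [h0, h1]
        refine ⟨(hsub hxS).1, lt_of_le_of_ne (hsub hxS).2 ?_⟩
        simpa using hx1
      obtain ⟨s, hs⟩ := exists_cell hm hxIco
      exact hxn s ⟨hxS, hs⟩
    · have : (⋃ s : Fin m, S ∩ cell a s) \ S = ∅ := by
        apply Set.eq_empty_iff_forall_notMem.2
        intro x hx
        obtain ⟨hxU, hxn⟩ := hx
        simp only [Set.mem_iUnion] at hxU
        obtain ⟨s, hs⟩ := hxU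
        exact hxn hs.1
      rw [this]; exact measure_empty
  rw [cakeval, MeasureTheory.setIntegral_congr_set hae]
  rw [MeasureTheory.integral_iUnion_ae]
  · rw [tsum_fintype]
    apply Finset.sum_congr rfl
    intro s _
    have := cakeval_subset_cell (s := s) (hc s) (hS.inter measurableSet_Ico)
      (fun x hx => Set.Ico_subset_Icc_self hx.2)
    rw [cakeval] at this
    exact this
  · exact fun s => ((hS.inter measurableSet_Ico)).nullMeasurableSet
  · intro s s' hss'
    have : (S ∩ cell a s) ∩ (S ∩ cell a s') = ∅ := by
      rw [Set.eq_empty_iff_forall_notMem]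
      intro x hx
      have := cell_disjoint hm hss' (a := a)
      rw [Set.eq_empty_iff_forall_notMem] at this
      exact this x ⟨hx.1.2, hx.2.2⟩
    show volume ((S ∩ cell a s) ∩ (S ∩ cell a s')) = 0
    rw [this]; exact measure_empty
  · exact hint.congr_set_ae hae.symm

section realize
variable {N : ℕ} {y : Fin N → Fin m → ℝ}

/-- stacking realization of a feasible matrix as an interval allocation -/
lemma realize (h0 : a 0 = 0) (h1 : a (Fin.last m) = 1) (hm : Monotone a)
    (hy : ∀ i s, 0 ≤ y i s)
    (hsum : ∀ s, (∑ i, y i s) ≤ a s.succ - a s.castSucc) :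
    ∃ B : Fin N → Set ℝ,
      (∀ i, B i ⊆ Set.Icc 0 1) ∧ (∀ i, FinUnionIcc (B i)) ∧
      (Pairwise fun i j => volume (B i ∩ B j) = 0) ∧
      (∀ i s, volume (B i ∩ cell a s) = ENNReal.ofReal (y i s)) ∧
      (∀ (f : ℝ → ℝ) (Fi : Fin m → ℝ), (∀ s, ∀ x ∈ cell a s, f x = Fi s) →
        ∀ i, cakeval f (B i) = ∑ s, Fi s * y i s) := by
  classical
  set lft : Fin N → Fin m → ℝ := fun i s => a s.castSucc + ∑ i' ∈ Finset.Iio i, y i' s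
    with hlft
  set pc : Fin N → Fin m → Set ℝ := fun i s => Set.Icc (lft i s) (lft i s + y i s) with hpc
  have fact1 : ∀ i s, a s.castSucc ≤ lft i s := by
    intro i s
    apply le_add_of_nonneg_right
    exact Finset.sum_nonneg fun i' _ => hy i' s
  have fact2' : ∀ s : Fin m, ∀ i j : Fin N, i < j → lft i s + y i s ≤ lft j s := by
    intro s i j hij
    rw [hlft]
    simp only [add_assoc]
    apply add_le_add (le_refl _)
    have : (∑ i' ∈ Finset.Iio i, y i' s) + y i s = ∑ i' ∈ insert i (Finset.Iio i), y i' s := by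
      rw [Finset.sum_insert (by simp)]
      ring
    rw [this]
    apply Finset.sum_le_sum_of_subset_of_nonneg
    · intro x hx
      simp only [Finset.mem_insert, Finset.mem_Iio] at hx ⊢
      rcases hx with rfl | hx
      · exact hij
      · exact lt_trans hx hij
    · exact fun i' _ _ => hy i' s
  have fact2 : ∀ i s, lft i s + y i s ≤ a s.succ := by
    intro i s
    have : (∑ i' ∈ Finset.Iio i, y i' s) + y i s ≤ ∑ i', y i' s := by
      rw [show (∑ i' ∈ Finset.Iio i, y i' s) + y i s
          = ∑ i' ∈ insert i (Finset.Iio i), y i' s by rw [Finset.sum_insert (by simp)]; ring]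
      apply Finset.sum_le_sum_of_subset_of_nonneg
      · intro x _; exact Finset.mem_univ x
      · exact fun i' _ _ => hy i' s
    have h2 := hsum s
    rw [hlft]
    simp only []
    linarith
  have fact3 : ∀ i s, pc i s ⊆ Set.Icc (a s.castSucc) (a s.succ) := by
    intro i s
    exact Set.Icc_subset_Icc (fact1 i s) (fact2 i s)
  have fact5 : ∀ (i j : Fin N) (s s' : Fin m), i ≠ j ∨ s ≠ s' →
      volume (pc i s ∩ pc j s') = 0 := by
    intro i j s s' hij
    by_cases hss : s = s'
    · subst hss
      rcases hij with hij | hij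
      · rcases lt_or_gt_of_ne hij with h | h
        · apply vol_subsingleton
          refine ⟨lft j s, fun x hx => ?_⟩
          have h1 : x ≤ lft i s + y i s := hx.1.2
          have h2 : lft j s ≤ x := hx.2.1
          have := fact2' s i j h
          simp only [Set.mem_singleton_iff]; linarith
        · apply vol_subsingleton
          refine ⟨lft i s, fun x hx => ?_⟩
          have h1 : x ≤ lft j s + y j s := hx.2.2
          have h2 : lft i s ≤ x := hx.1.1
          have := fact2' s j i h
          simp only [Set.mem_singleton_iff]; linarith
      · exact absurd rfl hij
    · rcases lt_or_gt_of_ne hss with h | h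
      · apply vol_subsingleton
        refine ⟨a s'.castSucc, fun x hx => ?_⟩
        have h1 : x ≤ a s.succ := (fact3 i s hx.1).2
        have h2 : a s'.castSucc ≤ x := (fact3 j s' hx.2).1
        have := succ_le_castSucc hm h
        simp only [Set.mem_singleton_iff]; linarith
      · apply vol_subsingleton
        refine ⟨a s.castSucc, fun x hx => ?_⟩
        have h1 : x ≤ a s'.succ := (fact3 j s' hx.2).2
        have h2 : a s.castSucc ≤ x := (fact3 i s hx.1).1
        have := succ_le_castSucc hm h
        simp only [Set.mem_singleton_iff]; linarith
  refine ⟨fun i => ⋃ s, pc i s, ?_, ?_, ?_, ?_, ?_⟩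
  · intro i x hx
    rw [Set.mem_iUnion] at hx
    obtain ⟨s, hs⟩ := hx
    have := cellIcc_subset_Icc hm s (fact3 i s hs)
    rwa [h0, h1] at this
  · intro i
    exact ⟨m, fun s => lft i s, fun s => lft i s + y i s, rfl⟩
  · intro i j hij
    refine measure_mono_null (t := ⋃ s : Fin m, ⋃ s' : Fin m, pc i s ∩ pc j s') ?_ ?_
    · intro x hx
      rw [Set.mem_inter_iff, Set.mem_iUnion] at hx
      obtain ⟨⟨s, hs⟩, hx2⟩ := hx
      rw [Set.mem_iUnion] at hx2
      obtain ⟨s', hs'⟩ := hx2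
      simp only [Set.mem_iUnion]
      exact ⟨s, s', hs, hs'⟩
    · apply measure_iUnion_null
      intro s
      apply measure_iUnion_null
      intro s'
      exact fact5 i j s s' (Or.inl hij)
  · intro i s
    apply le_antisymm
    · calc volume ((⋃ s', pc i s') ∩ cell a s)
          = volume (⋃ s', pc i s' ∩ cell a s) := by rw [Set.iUnion_inter]
        _ ≤ ∑' s', volume (pc i s' ∩ cell a s) := measure_iUnion_le _
        _ = ∑ s', volume (pc i s' ∩ cell a s) := tsum_fintype _
        _ ≤ ENNReal.ofReal (y i s) := by
            rw [Finset.sum_eq_single s]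
            · exact le_trans (measure_mono Set.inter_subset_left)
                (le_of_eq (by rw [hpc]; simp only []; rw [Real.volume_Icc]; ring_nf))
            · intro s' _ hss'
              rw [vol_inter_cell_eq_zero hm hss' (fact3 i s')]
            · intro h; exact absurd (Finset.mem_univ s) h
    · have hsub : Set.Ico (lft i s) (lft i s + y i s) ⊆ (⋃ s', pc i s') ∩ cell a s := by
        intro x hx
        constructor
        · rw [Set.mem_iUnion]
          exact ⟨s, Set.Ico_subset_Icc_self hx⟩
        · exact ⟨le_trans (fact1 i s) hx.1, lt_of_lt_of_le hx.2 (fact2 i s)⟩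
      calc ENNReal.ofReal (y i s) = volume (Set.Ico (lft i s) (lft i s + y i s)) := by
            rw [Real.volume_Ico]; ring_nf
        _ ≤ _ := measure_mono hsub
  · intro f Fi hc i
    have hmeas : ∀ s, MeasurableSet (pc i s) := fun s => measurableSet_Icc
    have hint : IntegrableOn f (⋃ s, pc i s) volume := by
      apply (integrableOn_of_const h0 h1 hm hc).mono_set
      intro x hx
      rw [Set.mem_iUnion] at hx
      obtain ⟨s, hs⟩ := hx
      have := cellIcc_subset_Icc hm s (fact3 i s hs)
      rwa [h0, h1] at this
    rw [cakeval, MeasureTheory.integral_iUnion_ae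
        (fun s => (hmeas s).nullMeasurableSet)
        (fun s s' hss' => by
          show volume (pc i s ∩ pc i s') = 0
          exact fact5 i i s s' (Or.inr hss')) hint]
    rw [tsum_fintype]
    apply Finset.sum_congr rfl
    intro s _
    have := cakeval_subset_cell (hc s) (hmeas s) (fact3 i s)
    rw [cakeval] at this
    rw [this, hpc]
    simp only []
    rw [Real.volume_Icc]
    rw [show lft i s + y i s - lft i s = y i s by ring]
    rw [ENNReal.toReal_ofReal (hy i s)]
end realize

section plan
variable {n m : ℕ}

/-- tight edge: `k ≠ 0` can receive from `i` at some cell `s` occupied by `i`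
where their value ratios are equal and `k`'s density is positive. -/
def tightE (R Fm : Fin (n+1) → Fin m → ℝ) (occ : Fin (n+1) → Fin m → Prop)
    (i k : Fin (n+1)) : Prop :=
  k ≠ 0 ∧ ∃ s, occ i s ∧ R k s = R i s ∧ 0 < Fm k s

/-- iterated reachability levels from agent `0` along tight edges -/
def Gl (R Fm : Fin (n+1) → Fin m → ℝ) (occ : Fin (n+1) → Fin m → Prop) :
    ℕ → Set (Fin (n+1))
  | 0 => {0}
  | (l+1) => Gl R Fm occ l ∪ {k | ∃ i ∈ Gl R Fm occ l, tightE R Fm occ i k}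

/-- all agents reachable from `0` along tight edges -/
def Gm (R Fm : Fin (n+1) → Fin m → ℝ) (occ : Fin (n+1) → Fin m → Prop) :
    Set (Fin (n+1)) := {k | ∃ l, k ∈ Gl R Fm occ l}

variable {R Fm : Fin (n+1) → Fin m → ℝ} {occ : Fin (n+1) → Fin m → Prop}

lemma Gl_mono : ∀ {l l' : ℕ}, l ≤ l' → Gl R Fm occ l ⊆ Gl R Fm occ l' := by
  intro l l' h
  induction h with
  | refl => exact fun x hx => hx
  | step _ ih => exact fun x hx => Or.inl (ih hx)

lemma zero_mem_Gl (l : ℕ) : (0 : Fin (n+1)) ∈ Gl R Fm occ l :=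
  Gl_mono (Nat.zero_le l) rfl

lemma zero_mem_Gm : (0 : Fin (n+1)) ∈ Gm R Fm occ := ⟨0, rfl⟩

lemma Gm_closed {i k : Fin (n+1)} (hi : i ∈ Gm R Fm occ)
    (h : tightE R Fm occ i k) : k ∈ Gm R Fm occ := by
  obtain ⟨l, hl⟩ := hi
  exact ⟨l + 1, Or.inr ⟨i, hl, h⟩⟩

lemma Gm_level : ∃ L, ∀ k : Fin (n+1), k ∈ Gm R Fm occ → k ∈ Gl R Fm occ L := by
  classical
  refine ⟨Finset.univ.sup (fun k : Fin (n+1) =>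
    if h : k ∈ Gm R Fm occ then h.choose else 0), fun k hk => ?_⟩
  have h1 : k ∈ Gl R Fm occ hk.choose := hk.choose_spec
  apply Gl_mono ?_ h1
  have : (if h : k ∈ Gm R Fm occ then h.choose else 0) = hk.choose := by
    rw [dif_pos hk]
  rw [← this]
  exact Finset.le_sup (f := fun k : Fin (n+1) =>
    if h : k ∈ Gm R Fm occ then h.choose else 0) (Finset.mem_univ k)

/-- existence of a transfer plan delivering prescribed value boosts to reachable
agents, supported on tight edges -/
lemma plan (hFnn : ∀ (j i : Fin (n+1)) (s : Fin m), occ i s → 0 ≤ Fm j s)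
    (s0 : Fin m) (l : ℕ) (b : Fin (n+1) → ℝ) (hb : ∀ k, 0 ≤ b k)
    (hsupp : ∀ k, b k ≠ 0 → k ∈ Gl R Fm occ l ∧ k ≠ 0) :
    ∃ δ : Fin (n+1) → Fin (n+1) → Fin m → ℝ,
      (∀ i k s, 0 ≤ δ i k s) ∧
      (∀ i k s, δ i k s ≠ 0 → i ≠ k ∧ k ≠ 0 ∧ occ i s ∧ R k s = R i s ∧ 0 < Fm k s
          ∧ i ∈ Gm R Fm occ ∧ k ∈ Gm R Fm occ) ∧
      (∀ k : Fin (n+1), k ≠ 0 →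
        (∑ s, Fm k s * ((∑ i, δ i k s) - (∑ j, δ k j s))) = b k) := by
  classical
  induction l generalizing b with
  | zero =>
    refine ⟨fun _ _ _ => 0, fun _ _ _ => le_refl 0, fun i k s h => absurd rfl h, fun k hk => ?_⟩
    have hbk : b k = 0 := by
      by_contra hbk
      obtain ⟨hmem, hk0⟩ := hsupp k hbk
      exact hk0 hmem
    simp [hbk]
  | succ l ih =>
    set bnew : Fin (n+1) → ℝ := fun k => if k ∈ Gl R Fm occ l then 0 else b k with hbnew
    set bold : Fin (n+1) → ℝ := fun k => if k ∈ Gl R Fm occ l then b k else 0 with hbold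
    have hsplit : ∀ k, b k = bold k + bnew k := by
      intro k; rw [hbold, hbnew]; by_cases h : k ∈ Gl R Fm occ l <;> simp [h]
    have hchoice : ∀ k : Fin (n+1), ∃ p : Fin (n+1) × Fin m, bnew k ≠ 0 →
        p.1 ∈ Gl R Fm occ l ∧ occ p.1 p.2 ∧ R k p.2 = R p.1 p.2 ∧ 0 < Fm k p.2 := by
      intro k
      by_cases h : bnew k ≠ 0
      · have hbk : b k ≠ 0 := by
          intro hc
          simp only [hbnew] at h
          apply h
          by_cases hkl : k ∈ Gl R Fm occ l <;> simp [hkl, hc]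
        have hknotl : k ∉ Gl R Fm occ l := by
          intro hc; simp only [hbnew] at h; exact h (by simp [hc])
        have hmem := (hsupp k hbk).1
        rcases hmem with hmem | hmem
        · exact absurd hmem hknotl
        · obtain ⟨i, hi, hik⟩ := hmem
          obtain ⟨_, s, hocc, hR, hF⟩ := hik
          exact ⟨⟨i, s⟩, fun _ => ⟨hi, hocc, hR, hF⟩⟩
      · exact ⟨⟨0, s0⟩, fun hc => absurd hc h⟩
    choose pc hpc using hchoice
    set ic : Fin (n+1) → Fin (n+1) := fun k => (pc k).1 with hic
    set sc : Fin (n+1) → Fin m := fun k => (pc k).2 with hsc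
    set δ1 : Fin (n+1) → Fin (n+1) → Fin m → ℝ := fun i k s =>
      if bnew k ≠ 0 ∧ i = ic k ∧ s = sc k then bnew k / Fm k (sc k) else 0 with hδ1
    set e : Fin (n+1) → ℝ := fun i =>
      ∑ k, (if bnew k ≠ 0 ∧ i = ic k then Fm i (sc k) * (bnew k / Fm k (sc k)) else 0) with he
    have hbnewnn : ∀ k, 0 ≤ bnew k := by
      intro k; simp only [hbnew]; by_cases h : k ∈ Gl R Fm occ l <;> simp [h, hb k]
    have henn : ∀ i, 0 ≤ e i := by
      intro i
      apply Finset.sum_nonneg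
      intro k _
      by_cases h : bnew k ≠ 0 ∧ i = ic k
      · rw [if_pos h]
        have hocc := (hpc k h.1).2.1
        have hFk := (hpc k h.1).2.2.2
        exact mul_nonneg (hFnn i (ic k) (sc k) hocc)
          (div_nonneg (hbnewnn k) (le_of_lt hFk))
      · rw [if_neg h]
    set b' : Fin (n+1) → ℝ := fun i => bold i + (if i = 0 then 0 else e i) with hb'
    have hb'nn : ∀ i, 0 ≤ b' i := by
      intro i
      simp only [hb']
      apply add_nonneg
      · simp only [hbold]; by_cases h : i ∈ Gl R Fm occ l <;> simp [h, hb i]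
      · by_cases h : i = 0 <;> simp [h, henn i]
    have hb'supp : ∀ i, b' i ≠ 0 → i ∈ Gl R Fm occ l ∧ i ≠ 0 := by
      intro i hi
      simp only [hb'] at hi
      by_cases h0 : i = 0
      · exfalso
        subst h0
        rw [if_pos rfl, add_zero] at hi
        simp only [hbold] at hi
        by_cases h : (0 : Fin (n+1)) ∈ Gl R Fm occ l
        · rw [if_pos h] at hi
          exact (hsupp 0 hi).2 rfl
        · rw [if_neg h] at hi; exact hi rfl
      · rw [if_neg h0] at hi
        refine ⟨?_, h0⟩
        by_cases hbo : bold i = 0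
        · rw [hbo, zero_add] at hi
          simp only [he] at hi
          obtain ⟨k, _, hk⟩ := Finset.exists_ne_zero_of_sum_ne_zero hi
          by_cases hc : bnew k ≠ 0 ∧ i = ic k
          · have h2 : ic k ∈ Gl R Fm occ l := (hpc k hc.1).1
            rw [← hc.2] at h2
            exact h2
          · rw [if_neg hc] at hk; exact absurd rfl hk
        · simp only [hbold] at hbo
          by_cases h : i ∈ Gl R Fm occ l
          · exact h
          · rw [if_neg h] at hbo; exact absurd rfl hbo
    obtain ⟨δ0, hδ0nn, hδ0supp, hδ0net⟩ := ih b' hb'nn hb'supp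
    refine ⟨fun i k s => δ0 i k s + δ1 i k s, ?_, ?_, ?_⟩
    · intro i k s
      apply add_nonneg (hδ0nn i k s)
      simp only [hδ1]
      by_cases h : bnew k ≠ 0 ∧ i = ic k ∧ s = sc k
      · rw [if_pos h]
        exact div_nonneg (hbnewnn k) (le_of_lt (hpc k h.1).2.2.2)
      · rw [if_neg h]
    · intro i k s h
      by_cases h0 : δ0 i k s ≠ 0
      · exact hδ0supp i k s h0
      · push_neg at h0
        have h' : δ0 i k s + δ1 i k s ≠ 0 := h
        rw [h0, zero_add] at h'
        clear h
        rename' h' => h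
        simp only [hδ1] at h
        by_cases hc : bnew k ≠ 0 ∧ i = ic k ∧ s = sc k
        · obtain ⟨hbk, hik, hsk⟩ := hc
          obtain ⟨hil, hocc, hR, hF⟩ := hpc k hbk
          have hbk' : b k ≠ 0 := by
            simp only [hbnew] at hbk
            by_cases hkl : k ∈ Gl R Fm occ l
            · rw [if_pos hkl] at hbk; exact absurd rfl hbk
            · rwa [if_neg hkl] at hbk
          have hknotl : k ∉ Gl R Fm occ l := by
            intro hcc; simp only [hbnew] at hbk; exact hbk (by simp [hcc])
          have hkGl1 : k ∈ Gl R Fm occ (l+1) := (hsupp k hbk').1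
          subst hik; subst hsk
          refine ⟨?_, (hsupp k hbk').2, hocc, hR, hF, ⟨l, hil⟩, ⟨l+1, hkGl1⟩⟩
          intro hik
          have hil' : ic k ∈ Gl R Fm occ l := hil
          rw [hik] at hil'
          exact hknotl hil'
        · rw [if_neg hc] at h; exact absurd rfl h
    · intro k hk
      show (∑ s, Fm k s * ((∑ i, (δ0 i k s + δ1 i k s)) - (∑ j, (δ0 k j s + δ1 k j s)))) = b k
      have hlin : (∑ s, Fm k s * ((∑ i, (δ0 i k s + δ1 i k s)) - (∑ j, (δ0 k j s + δ1 k j s))))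
          = (∑ s, Fm k s * ((∑ i, δ0 i k s) - (∑ j, δ0 k j s)))
            + ((∑ s, Fm k s * (∑ i, δ1 i k s)) - (∑ s, Fm k s * (∑ j, δ1 k j s))) := by
        rw [← Finset.sum_sub_distrib, ← Finset.sum_add_distrib]
        apply Finset.sum_congr rfl
        intro s _
        rw [Finset.sum_add_distrib, Finset.sum_add_distrib]
        ring
      rw [hlin, hδ0net k hk]
      have hin : (∑ s, Fm k s * (∑ i, δ1 i k s)) = bnew k := by
        have hinner : ∀ s, (∑ i, δ1 i k s)
            = if bnew k ≠ 0 ∧ s = sc k then bnew k / Fm k (sc k) else 0 := by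
          intro s
          have hterm : ∀ i, δ1 i k s = if i = ic k then
              (if bnew k ≠ 0 ∧ s = sc k then bnew k / Fm k (sc k) else 0) else 0 := by
            intro i
            simp only [hδ1]
            by_cases h1 : i = ic k
            · subst h1
              by_cases h2 : bnew k ≠ 0 ∧ s = sc k
              · rw [if_pos ⟨h2.1, rfl, h2.2⟩, if_pos rfl, if_pos h2]
              · rw [if_neg (fun hc => h2 ⟨hc.1, hc.2.2⟩), if_pos rfl, if_neg h2]
            · rw [if_neg (fun hc => h1 hc.2.1), if_neg h1]
          rw [Finset.sum_congr rfl (fun i _ => hterm i), Finset.sum_ite_eq' Finset.univ]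
          simp
        rw [Finset.sum_congr rfl (fun s (_ : s ∈ Finset.univ) => by rw [hinner s])]
        have hterm2 : ∀ s : Fin m, Fm k s *
            (if bnew k ≠ 0 ∧ s = sc k then bnew k / Fm k (sc k) else 0)
            = if s = sc k then (if bnew k ≠ 0 then Fm k (sc k) * (bnew k / Fm k (sc k)) else 0)
              else 0 := by
          intro s
          by_cases h1 : s = sc k
          · subst h1
            by_cases h2 : bnew k ≠ 0
            · rw [if_pos ⟨h2, rfl⟩, if_pos rfl, if_pos h2]
            · rw [if_neg (fun hc => h2 hc.1), if_pos rfl, if_neg h2, mul_zero]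
          · rw [if_neg (fun hc => h1 hc.2), if_neg h1, mul_zero]
        rw [Finset.sum_congr rfl (fun s _ => hterm2 s), Finset.sum_ite_eq' Finset.univ]
        rw [if_pos (Finset.mem_univ _)]
        by_cases h2 : bnew k ≠ 0
        · rw [if_pos h2, mul_div_cancel₀ _ (ne_of_gt (hpc k h2).2.2.2)]
        · rw [if_neg h2]; push_neg at h2; rw [h2]
      have hout : (∑ s, Fm k s * (∑ j, δ1 k j s)) = e k := by
        have hswap : (∑ s, Fm k s * (∑ j, δ1 k j s)) = ∑ j, ∑ s, Fm k s * δ1 k j s := by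
          rw [Finset.sum_comm]
          apply Finset.sum_congr rfl
          intro s _
          rw [Finset.mul_sum]
        rw [hswap, he]
        apply Finset.sum_congr rfl
        intro j _
        have hterm : ∀ s : Fin m, Fm k s * δ1 k j s = if s = sc j then
            (if bnew j ≠ 0 ∧ k = ic j then Fm k (sc j) * (bnew j / Fm j (sc j)) else 0)
            else 0 := by
          intro s
          simp only [hδ1]
          by_cases h1 : s = sc j
          · subst h1
            by_cases h2 : bnew j ≠ 0 ∧ k = ic j
            · rw [if_pos ⟨h2.1, h2.2, rfl⟩, if_pos rfl, if_pos h2]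
            · rw [if_neg (fun hc => h2 ⟨hc.1, hc.2.1⟩), if_pos rfl, if_neg h2, mul_zero]
          · rw [if_neg (fun hc => h1 hc.2.2), if_neg h1, mul_zero]
        rw [Finset.sum_congr rfl (fun s _ => hterm s), Finset.sum_ite_eq' Finset.univ]
        rw [if_pos (Finset.mem_univ _)]
      rw [hin, hout, hb']
      simp only [if_neg hk]
      rw [hsplit k]
      simp only [hbold]
      ring
end plan

end B2

set_option maxHeartbeats 1000000 in
/-- Lemma B.2 (strict resource monotonicity for weakly MNW allocations): if `A` is a
weakly MNW allocation on `[0,1] − I`, where `I` is a positive-measure subset of a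
single cell `X_t` on which `f_1` is strictly positive, and agent 1 (index `0`)
deserves `I`, i.e. `f_1(I)/v_1(A_1) ≥ f_j(I)/v_j(A_j)` for all agents `j`, then
there is a weakly MNW allocation `A⁺` on `[0,1]` that is strictly better for
agent 1 and weakly better for every other agent. -/
theorem weakly_mnw_strict_resource_monotonicity (n m : ℕ) (f : Fin (n + 1) → ℝ → ℝ)
    (hf : ∀ i, ValidDensity (f i))
    (a : Fin (m + 1) → ℝ) (F : Fin (n + 1) → Fin m → ℝ)
    (hpart : IsPartitionPts m a) (hconst : ConstOnCells f a F)
    (t : Fin m) (I : Set ℝ) (hImeas : MeasurableSet I) (hIsub : I ⊆ cell a t)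
    (hIpos : 0 < volume I) (hf1pos : 0 < F 0 t)
    (A : Fin (n + 1) → Set ℝ)
    (hA : WeaklyMNWOn (Set.Icc 0 1 \ I) f a F A)
    (hdeserve : ∀ j : Fin (n + 1),
      F j t / cakeval (f j) (A j) ≤ F 0 t / cakeval (f 0) (A 0)) :
    ∃ Aplus : Fin (n + 1) → Set ℝ, WeaklyMNWOn (Set.Icc 0 1) f a F Aplus ∧
      cakeval (f 0) (A 0) < cakeval (f 0) (Aplus 0) ∧
      ∀ i : Fin (n + 1), i ≠ 0 → cakeval (f i) (A i) ≤ cakeval (f i) (Aplus i) := by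
  classical
  obtain ⟨h0, h1, hmono⟩ := hpart
  obtain ⟨⟨hAsub, hAfin, hApair⟩, hupos, hAratio⟩ := hA
  set u : Fin (n+1) → ℝ := fun i => cakeval (f i) (A i) with hu
  set y : Fin (n+1) → Fin m → ℝ := fun i s => (volume (A i ∩ cell a s)).toReal with hy
  set R : Fin (n+1) → Fin m → ℝ := fun i s => F i s / u i with hRdef
  have hum : ∀ i, 0 < u i := hupos
  have hAmeas : ∀ i, MeasurableSet (A i) := fun i => B2.finUnionIcc_measurable (hAfin i)
  have hA01 : ∀ i, A i ⊆ Set.Icc 0 1 := fun i x hx => (hAsub i hx).1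
  have hAI : ∀ i, A i ∩ I = ∅ := by
    intro i
    rw [Set.eq_empty_iff_forall_notMem]
    exact fun x hx => (hAsub i hx.1).2 hx.2
  have hcellfin : ∀ s : Fin m, volume (cell a s) ≠ ⊤ := by
    intro s; rw [cell, Real.volume_Ico]; exact ENNReal.ofReal_ne_top
  have hyfin : ∀ i s, volume (A i ∩ cell a s) ≠ ⊤ :=
    fun i s => ne_top_of_le_ne_top (hcellfin s) (measure_mono Set.inter_subset_right)
  have hynn : ∀ i s, 0 ≤ y i s := fun i s => ENNReal.toReal_nonneg
  have hypos : ∀ i s, 0 < y i s → 0 < volume (A i ∩ cell a s) := by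
    intro i s h
    rcases eq_zero_or_pos (volume (A i ∩ cell a s)) with hz | hp
    · exfalso
      have : y i s = 0 := by simp only [hy, hz, ENNReal.toReal_zero]
      rw [this] at h; exact absurd h (lt_irrefl 0)
    · exact hp
  have hcellt : (cell a t).Nonempty := by
    rcases Set.eq_empty_or_nonempty (cell a t) with he | hne
    · exfalso
      have hIe : volume I = 0 := by
        apply measure_mono_null hIsub; rw [he]; exact measure_empty
      rw [hIe] at hIpos; exact absurd hIpos (lt_irrefl 0)
    · exact hne
  have hcells : ∀ i s, 0 < y i s → (cell a s).Nonempty := by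
    intro i s h
    rcases Set.eq_empty_or_nonempty (cell a s) with he | hne
    · exfalso
      have hz : volume (A i ∩ cell a s) = 0 := by
        apply measure_mono_null Set.inter_subset_right; rw [he]; exact measure_empty
      have h2 := hypos i s h
      rw [hz] at h2; exact absurd h2 (lt_irrefl 0)
    · exact hne
  have hFnonneg : ∀ (j : Fin (n+1)) (s : Fin m), (cell a s).Nonempty → 0 ≤ F j s := by
    intro j s hne
    obtain ⟨x, hx⟩ := hne
    rw [← hconst j s x hx]
    exact (hf j).2.1 x
  have hval : ∀ i, u i = ∑ s, F i s * y i s := by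
    intro i
    exact B2.cakeval_decomp h0 h1 hmono (fun s x hx => hconst i s x hx) (hAmeas i) (hA01 i)
  have hratio' : ∀ (s : Fin m) (i : Fin (n+1)), 0 < y i s →
      ∀ j : Fin (n+1), j ≠ 0 → R j s ≤ R i s := by
    intro s i hyi j hj
    exact hAratio s i (hypos i s hyi) j hj
  have hdes' : ∀ j, R j t ≤ R 0 t := hdeserve
  set l : Fin m → ℝ := fun s => a s.succ - a s.castSucc with hldef
  have hlnn : ∀ s, 0 ≤ l s := by
    intro s
    have : a s.castSucc ≤ a s.succ := hmono (le_of_lt (Fin.castSucc_lt_succ : s.castSucc < s.succ))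
    simp only [hldef]; linarith
  have hvolcell : ∀ s, volume (cell a s) = ENNReal.ofReal (l s) := by
    intro s; rw [cell, Real.volume_Ico]
  set vI : ℝ := (volume I).toReal with hvIdef
  have hIfin : volume I ≠ ⊤ := ne_top_of_le_ne_top (hcellfin t) (measure_mono hIsub)
  have hvIpos : 0 < vI := ENNReal.toReal_pos (ne_of_gt hIpos) hIfin
  have hcap : ∀ s : Fin m, (∑ i, y i s) + (if s = t then vI else 0) ≤ l s := by
    intro s
    have hdisj : Pairwise (Function.onFun (MeasureTheory.AEDisjoint volume) (fun i => A i ∩ cell a s)) := by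
      intro i j hij
      apply measure_mono_null ?_ (hApair hij)
      exact Set.inter_subset_inter Set.inter_subset_left Set.inter_subset_left
    have hsum : volume (⋃ i, A i ∩ cell a s) = ∑ i, volume (A i ∩ cell a s) := by
      rw [MeasureTheory.measure_iUnion₀ hdisj
        (fun i => ((hAmeas i).inter measurableSet_Ico).nullMeasurableSet), tsum_fintype]
    have hUsub : (⋃ i, A i ∩ cell a s) ⊆ cell a s :=
      Set.iUnion_subset fun i => Set.inter_subset_right
    have hbig : (∑ i, volume (A i ∩ cell a s)) + (if s = t then volume I else 0)
        ≤ volume (cell a s) := by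
      by_cases hst : s = t
      · subst hst
        rw [if_pos rfl, ← hsum]
        have hdisj2 : volume ((⋃ i, A i ∩ cell a s) ∩ I) = 0 := by
          have he : (⋃ i, A i ∩ cell a s) ∩ I = ∅ := by
            rw [Set.eq_empty_iff_forall_notMem]
            rintro x ⟨hx1, hx2⟩
            rw [Set.mem_iUnion] at hx1
            obtain ⟨i, hi⟩ := hx1
            have h3 := hAI i
            rw [Set.eq_empty_iff_forall_notMem] at h3
            exact h3 x ⟨hi.1, hx2⟩
          rw [he]; exact measure_empty
        calc volume (⋃ i, A i ∩ cell a s) + volume I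
            = volume ((⋃ i, A i ∩ cell a s) ∪ I) := by
              rw [MeasureTheory.measure_union₀ hImeas.nullMeasurableSet hdisj2]
          _ ≤ volume (cell a s) := measure_mono (Set.union_subset hUsub hIsub)
      · rw [if_neg hst, add_zero, ← hsum]
        exact measure_mono hUsub
    have hfin1 : (∑ i, volume (A i ∩ cell a s)) ≠ ⊤ := by
      rw [← hsum]
      exact ne_top_of_le_ne_top (hcellfin s) (measure_mono hUsub)
    have hfin2 : (if s = t then volume I else 0) ≠ ⊤ := by
      by_cases hst : s = t
      · rw [if_pos hst]; exact hIfin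
      · rw [if_neg hst]; exact ENNReal.zero_ne_top
    have htR := ENNReal.toReal_mono (hcellfin s) hbig
    rw [ENNReal.toReal_add hfin1 hfin2, ENNReal.toReal_sum (fun i _ => hyfin i s)] at htR
    rw [hvolcell s, ENNReal.toReal_ofReal (hlnn s)] at htR
    have hite : (if s = t then volume I else 0).toReal = (if s = t then vI else 0) := by
      by_cases hst : s = t
      · rw [if_pos hst, if_pos hst]
      · rw [if_neg hst, if_neg hst]; exact ENNReal.toReal_zero
    rw [hite] at htR
    exact htR
  -- the tightness graph
  set occ : Fin (n+1) → Fin m → Prop := fun i s => 0 < y i s ∨ (i = 0 ∧ s = t) with hoccdef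
  have hoccne : ∀ i s, occ i s → (cell a s).Nonempty := by
    intro i s h
    rcases h with h | ⟨_, rfl⟩
    · exact hcells i s h
    · exact hcellt
  have hFnn : ∀ (j i : Fin (n+1)) (s : Fin m), occ i s → 0 ≤ F j s :=
    fun j i s h => hFnonneg j s (hoccne i s h)
  set Gmem : Set (Fin (n+1)) := B2.Gm R F occ with hGmemdef
  obtain ⟨L, hL⟩ := B2.Gm_level (R := R) (Fm := F) (occ := occ)
  set b : Fin (n+1) → ℝ := fun k => if k ∈ Gmem ∧ k ≠ 0 then u k else 0 with hbdef
  have hbnn : ∀ k, 0 ≤ b k := by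
    intro k; simp only [hbdef]
    by_cases hk : k ∈ Gmem ∧ k ≠ 0
    · rw [if_pos hk]; exact le_of_lt (hum k)
    · rw [if_neg hk]
  have hbsupp : ∀ k, b k ≠ 0 → k ∈ B2.Gl R F occ L ∧ k ≠ 0 := by
    intro k hk
    simp only [hbdef] at hk
    by_cases hkm : k ∈ Gmem ∧ k ≠ 0
    · exact ⟨hL k hkm.1, hkm.2⟩
    · rw [if_neg hkm] at hk; exact absurd rfl hk
  obtain ⟨δ, hδnn, hδsupp, hδnet⟩ := B2.plan hFnn t L b hbnn hbsupp
  set out : Fin (n+1) → Fin m → ℝ := fun i s => ∑ k, δ i k s with houtdef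
  set inn : Fin (n+1) → Fin m → ℝ := fun k s => ∑ i, δ i k s with hinndef
  have houtnn : ∀ i s, 0 ≤ out i s := by
    intro i s
    apply Finset.sum_nonneg
    exact fun k _ => hδnn i k s
  have hinnnn : ∀ k s, 0 ≤ inn k s := by
    intro k s
    apply Finset.sum_nonneg
    exact fun i _ => hδnn i k s
  have hinn0 : ∀ s, inn 0 s = 0 := by
    intro s
    show (∑ i', δ i' 0 s) = 0
    apply Finset.sum_eq_zero
    intro i' _
    by_contra hne
    exact (hδsupp i' 0 s hne).2.1 rfl
  have houtocc : ∀ i s, out i s ≠ 0 → occ i s := by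
    intro i s h
    have h' : (∑ k, δ i k s) ≠ 0 := h
    obtain ⟨k, _, hk⟩ := Finset.exists_ne_zero_of_sum_ne_zero h'
    exact (hδsupp i k s hk).2.2.1
  set cost0 : ℝ := ∑ s, F 0 s * out 0 s with hcost0def
  have hcost0nn : 0 ≤ cost0 := by
    apply Finset.sum_nonneg
    intro s _
    by_cases hz : out 0 s = 0
    · rw [hz, mul_zero]
    · exact mul_nonneg (hFnn 0 0 s (houtocc 0 s hz)) (houtnn 0 s)
  set g : ℝ := (cost0 + u 0 / 2) / F 0 t with hgdef
  have hgpos : 0 < g := div_pos (by linarith [hum 0, hcost0nn]) hf1pos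
  -- choice of η
  haveI : Nonempty (Fin m) := ⟨t⟩
  set ηA : ℝ := Finset.univ.inf' Finset.univ_nonempty
    (fun p : Fin (n+1) × Fin (n+1) × Fin m =>
      if 0 < R p.2.1 p.2.2 ∧ R p.2.1 p.2.2 < R p.1 p.2.2
      then R p.1 p.2.2 / R p.2.1 p.2.2 - 1 else 1) with hηAdef
  have hηApos : 0 < ηA := by
    rw [hηAdef, Finset.lt_inf'_iff]
    intro p _
    by_cases hp : 0 < R p.2.1 p.2.2 ∧ R p.2.1 p.2.2 < R p.1 p.2.2
    · rw [if_pos hp]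
      have := (one_lt_div hp.1).2 hp.2
      linarith
    · rw [if_neg hp]; exact one_pos
  set η2 : ℝ := Finset.univ.inf' Finset.univ_nonempty
    (fun p : Fin (n+1) × Fin m =>
      if 0 < out p.1 p.2 ∧ ¬(p.1 = 0 ∧ p.2 = t) then y p.1 p.2 / out p.1 p.2 else 1)
    with hη2def
  have hη2pos : 0 < η2 := by
    rw [hη2def, Finset.lt_inf'_iff]
    intro p _
    by_cases hp : 0 < out p.1 p.2 ∧ ¬(p.1 = 0 ∧ p.2 = t)
    · rw [if_pos hp]
      have hyp : 0 < y p.1 p.2 := by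
        rcases houtocc p.1 p.2 (ne_of_gt hp.1) with h | h
        · exact h
        · exact absurd h hp.2
      exact div_pos hyp hp.1
    · rw [if_neg hp]; exact one_pos
  set η3 : ℝ := vI / g with hη3def
  have hη3pos : 0 < η3 := div_pos hvIpos hgpos
  set η : ℝ := min ηA (min η2 η3) with hηdef
  have hηpos : 0 < η := lt_min hηApos (lt_min hη2pos hη3pos)
  have hηA_le : ∀ (i j : Fin (n+1)) (s : Fin m), 0 < R j s → R j s < R i s →
      η ≤ R i s / R j s - 1 := by
    intro i j s hp1 hp2
    have h6 : η ≤ ηA := min_le_left _ _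
    have h7 := Finset.inf'_le (f := fun p : Fin (n+1) × Fin (n+1) × Fin m =>
      if 0 < R p.2.1 p.2.2 ∧ R p.2.1 p.2.2 < R p.1 p.2.2
      then R p.1 p.2.2 / R p.2.1 p.2.2 - 1 else 1)
      (Finset.mem_univ (i, j, s))
    rw [if_pos ⟨hp1, hp2⟩] at h7
    rw [hηAdef] at h6
    exact le_trans h6 h7
  have hη2_le : ∀ (i : Fin (n+1)) (s : Fin m), 0 < out i s → ¬(i = 0 ∧ s = t) →
      η ≤ y i s / out i s := by
    intro i s hp1 hp2
    have h6 : η ≤ η2 := le_trans (min_le_right _ _) (min_le_left _ _)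
    have h7 := Finset.inf'_le (f := fun p : Fin (n+1) × Fin m =>
      if 0 < out p.1 p.2 ∧ ¬(p.1 = 0 ∧ p.2 = t) then y p.1 p.2 / out p.1 p.2 else 1)
      (Finset.mem_univ (i, s))
    rw [if_pos ⟨hp1, hp2⟩] at h7
    rw [hη2def] at h6
    exact le_trans h6 h7
  have hηg : η * g ≤ vI := by
    have hle : η ≤ η3 := le_trans (min_le_right _ _) (min_le_right _ _)
    calc η * g ≤ η3 * g := mul_le_mul_of_nonneg_right hle (le_of_lt hgpos)
      _ = vI := by rw [hη3def]; exact div_mul_cancel₀ _ (ne_of_gt hgpos)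
  clear_value η ηA η2 η3
  clear hηAdef hη2def hη3def hηdef hηApos hη2pos hη3pos
  -- the new matrix
  set Y : Fin (n+1) → Fin m → ℝ := fun i s =>
    y i s - η * out i s + η * inn i s + (if i = 0 ∧ s = t then η * g else 0) with hYdef
  have houtcap : ∀ i s, ¬(i = 0 ∧ s = t) → η * out i s ≤ y i s := by
    intro i s hnot
    by_cases hz : out i s = 0
    · rw [hz, mul_zero]; exact hynn i s
    · have hop : 0 < out i s := lt_of_le_of_ne (houtnn i s) (Ne.symm hz)
      have hyp : 0 < y i s := by
        rcases houtocc i s hz with h | h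
        · exact h
        · exact absurd h hnot
      have hle : η ≤ y i s / out i s := hη2_le i s hop hnot
      calc η * out i s ≤ (y i s / out i s) * out i s :=
            mul_le_mul_of_nonneg_right hle (le_of_lt hop)
        _ = y i s := div_mul_cancel₀ _ (ne_of_gt hop)
  have hYnn : ∀ i s, 0 ≤ Y i s := by
    intro i s
    by_cases hit : i = 0 ∧ s = t
    · obtain ⟨hi0, hst⟩ := hit
      have h2 : F 0 t * out 0 t ≤ cost0 := by
        apply Finset.single_le_sum (f := fun s => F 0 s * out 0 s) ?_ (Finset.mem_univ t)
        intro s _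
        show 0 ≤ F 0 s * out 0 s
        by_cases hz : out 0 s = 0
        · rw [hz, mul_zero]
        · exact mul_nonneg (hFnn 0 0 s (houtocc 0 s hz)) (houtnn 0 s)
      have h3 : out 0 t ≤ g := by
        rw [hgdef, le_div_iff₀ hf1pos]
        nlinarith [hum 0]
      show 0 ≤ y i s - η * out i s + η * inn i s
          + (if i = 0 ∧ s = t then η * g else 0)
      rw [if_pos ⟨hi0, hst⟩, hi0, hst, hinn0 t]
      have h4 := mul_le_mul_of_nonneg_left h3 (le_of_lt hηpos)
      have h5 := hynn 0 t
      linarith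
    · show 0 ≤ y i s - η * out i s + η * inn i s + (if i = 0 ∧ s = t then η * g else 0)
      rw [if_neg hit]
      have h2 := houtcap i s hit
      have h4 := mul_nonneg (le_of_lt hηpos) (hinnnn i s)
      linarith
  have hcolsum : ∀ s, (∑ i, inn i s) = (∑ i, out i s) := by
    intro s
    show (∑ i, ∑ i', δ i' i s) = (∑ i, ∑ k, δ i k s)
    rw [Finset.sum_comm]
  have hYsum : ∀ s, (∑ i, Y i s) ≤ l s := by
    intro s
    have hgate : (∑ i : Fin (n+1), if i = 0 ∧ s = t then η * g else 0)
        = (if s = t then η * g else 0) := by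
      by_cases hst : s = t
      · rw [if_pos hst]
        rw [Finset.sum_eq_single 0]
        · rw [if_pos ⟨rfl, hst⟩]
        · intro i _ hi; rw [if_neg (fun hc => hi hc.1)]
        · intro hc; exact absurd (Finset.mem_univ 0) hc
      · rw [if_neg hst]
        apply Finset.sum_eq_zero
        intro i _
        rw [if_neg (fun hc => hst hc.2)]
    have hsplit : (∑ i, Y i s) = (∑ i, y i s)
        + η * ((∑ i, inn i s) - (∑ i, out i s)) + (if s = t then η * g else 0) := by
      show (∑ i, (y i s - η * out i s + η * inn i s
          + (if i = 0 ∧ s = t then η * g else 0))) = _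
      rw [Finset.sum_add_distrib, Finset.sum_add_distrib, Finset.sum_sub_distrib,
        ← Finset.mul_sum, ← Finset.mul_sum, hgate]
      ring
    rw [hsplit, hcolsum s, sub_self, mul_zero, add_zero]
    have hcs := hcap s
    by_cases hst : s = t
    · rw [if_pos hst] at hcs ⊢
      linarith [hηg]
    · rw [if_neg hst] at hcs ⊢
      linarith
  obtain ⟨B, hBsub, hBfin, hBpair, hBvol, hBval⟩ := B2.realize h0 h1 hmono hYnn hYsum
  have hvB : ∀ i, cakeval (f i) (B i) = ∑ s, F i s * Y i s :=
    fun i => hBval (f i) (fun s => F i s) (fun s x hx => hconst i s x hx) i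
  have hvBj : ∀ j, j ≠ 0 → cakeval (f j) (B j) = u j + η * b j := by
    intro j hj
    rw [hvB j]
    have hexp : ∀ s, F j s * Y j s
        = F j s * y j s + η * (F j s * (inn j s - out j s)) := by
      intro s
      show F j s * (y j s - η * out j s + η * inn j s
          + (if j = 0 ∧ s = t then η * g else 0)) = _
      rw [if_neg (fun hc : j = 0 ∧ s = t => hj hc.1)]
      ring
    rw [Finset.sum_congr rfl (fun s _ => hexp s), Finset.sum_add_distrib, ← Finset.mul_sum,
      ← hval j]
    congr 1
    have hnet := hδnet j hj
    have : (∑ s, F j s * (inn j s - out j s))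
        = (∑ s, F j s * ((∑ i, δ i j s) - (∑ k, δ j k s))) := rfl
    rw [this, hnet]
  have hvB0 : cakeval (f 0) (B 0) = u 0 + η * (u 0 / 2) := by
    rw [hvB 0]
    have hexp : ∀ s, F 0 s * Y 0 s = F 0 s * y 0 s - η * (F 0 s * out 0 s)
        + η * (F 0 s * inn 0 s) + (if s = t then F 0 s * (η * g) else 0) := by
      intro s
      show F 0 s * (y 0 s - η * out 0 s + η * inn 0 s
          + (if (0 : Fin (n+1)) = 0 ∧ s = t then η * g else 0)) = _
      by_cases hst : s = t
      · rw [if_pos ⟨rfl, hst⟩, if_pos hst]; ring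
      · rw [if_neg (fun hc : (0 : Fin (n+1)) = 0 ∧ s = t => hst hc.2), if_neg hst]; ring
    rw [Finset.sum_congr rfl (fun s _ => hexp s)]
    rw [Finset.sum_add_distrib, Finset.sum_add_distrib, Finset.sum_sub_distrib,
      ← Finset.mul_sum, ← Finset.mul_sum, ← hval 0]
    have hz : (∑ s, F 0 s * inn 0 s) = 0 := by
      apply Finset.sum_eq_zero; intro s _; rw [hinn0 s, mul_zero]
    have hgate : (∑ s, if s = t then F 0 s * (η * g) else 0) = F 0 t * (η * g) := by
      rw [Finset.sum_ite_eq' Finset.univ t (fun s => F 0 s * (η * g))]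
      rw [if_pos (Finset.mem_univ t)]
    have hCc : (∑ s, F 0 s * out 0 s) = cost0 := rfl
    rw [hz, hgate, mul_zero, add_zero, hCc]
    have hFg : F 0 t * (η * g) = η * (cost0 + u 0 / 2) := by
      rw [hgdef]
      field_simp
    rw [hFg]; ring
  have hvge : ∀ i, u i ≤ cakeval (f i) (B i) := by
    intro i
    by_cases hi0 : i = 0
    · subst hi0
      rw [hvB0]
      nlinarith [hum 0, hηpos]
    · rw [hvBj i hi0]
      nlinarith [hbnn i, hηpos]
  have hvpos : ∀ i, 0 < cakeval (f i) (B i) := fun i => lt_of_lt_of_le (hum i) (hvge i)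
  have hvmem : ∀ j, j ≠ 0 → j ∈ Gmem → cakeval (f j) (B j) = u j * (1 + η) := by
    intro j hj hjm
    rw [hvBj j hj]
    have : b j = u j := by simp only [hbdef]; rw [if_pos ⟨hjm, hj⟩]
    rw [this]; ring
  have hvnot : ∀ j, j ≠ 0 → j ∉ Gmem → cakeval (f j) (B j) = u j := by
    intro j hj hjm
    rw [hvBj j hj]
    have : b j = 0 := by simp only [hbdef]; rw [if_neg (fun hc => hjm hc.1)]
    rw [this]; ring
  have hv0 : cakeval (f 0) (B 0) = u 0 * (1 + η / 2) := by rw [hvB0]; ring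
  have hvle : ∀ i, cakeval (f i) (B i) ≤ u i * (1 + η) := by
    intro i
    by_cases hi0 : i = 0
    · subst hi0; rw [hv0]; nlinarith [hum 0, hηpos]
    · by_cases him : i ∈ Gmem
      · rw [hvmem i hi0 him]
      · rw [hvnot i hi0 him]; nlinarith [hum i, hηpos]
  refine ⟨B, ⟨⟨hBsub, hBfin, hBpair⟩, hvpos, ?_⟩, ?_, ?_⟩
  · -- the weak MNW ratio conditions
    intro s i hvol j hj
    have hYpos : 0 < Y i s := by
      rw [hBvol i s] at hvol
      exact ENNReal.ofReal_pos.1 hvol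
    have hlpos : 0 < l s := by
      have h5 : Y i s ≤ ∑ i', Y i' s :=
        Finset.single_le_sum (fun i' _ => hYnn i' s) (Finset.mem_univ i)
      linarith [hYsum s]
    have hcne : (cell a s).Nonempty := by
      rw [cell, Set.nonempty_Ico]
      simp only [hldef] at hlpos; linarith
    have hFj : 0 ≤ F j s := hFnonneg j s hcne
    have hFi : 0 ≤ F i s := hFnonneg i s hcne
    have hclass : (0 < y i s) ∨ (∃ hg : Fin (n+1), δ hg i s ≠ 0) ∨ (i = 0 ∧ s = t) := by
      by_contra hcon
      push_neg at hcon
      obtain ⟨hc1, hc2, hc3⟩ := hcon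
      have hy0 : y i s = 0 := le_antisymm hc1 (hynn i s)
      have hi0 : inn i s = 0 := Finset.sum_eq_zero (fun hg _ => hc2 hg)
      have hYle : Y i s ≤ 0 := by
        show y i s - η * out i s + η * inn i s + (if i = 0 ∧ s = t then η * g else 0) ≤ 0
        rw [if_neg (fun hc : i = 0 ∧ s = t => hc3 hc.1 hc.2), hy0, hi0,
          mul_zero, add_zero, zero_sub, add_zero]
        simp only [neg_nonpos]
        exact mul_nonneg (le_of_lt hηpos) (houtnn i s)
      linarith
    have hP1 : ∀ j', j' ≠ (0 : Fin (n+1)) → R j' s ≤ R i s := by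
      rcases hclass with hcl | hcl | hcl
      · exact fun j' hj' => hratio' s i hcl j' hj'
      · obtain ⟨hgv, hδ'⟩ := hcl
        obtain ⟨_, _, hocch, hRih, _, _, _⟩ := hδsupp hgv i s hδ'
        intro j' hj'
        rw [hRih]
        rcases hocch with h | ⟨hgv0, hst⟩
        · exact hratio' s hgv h j' hj'
        · rw [hgv0, hst]
          exact hdes' j'
      · intro j' hj'
        rw [hcl.1, hcl.2]
        exact hdes' j'
    have hP2 : ∀ j', j' ≠ (0 : Fin (n+1)) → R j' s = R i s → 0 < F j' s →
        i ∈ Gmem → j' ∈ Gmem := by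
      intro j' hj' hR hF him
      rcases hclass with hcl | hcl | hcl
      · exact B2.Gm_closed him ⟨hj', s, Or.inl hcl, by rw [hR], hF⟩
      · obtain ⟨hgv, hδ'⟩ := hcl
        obtain ⟨_, _, hocch, hRih, _, hgm, _⟩ := hδsupp hgv i s hδ'
        exact B2.Gm_closed hgm ⟨hj', s, hocch, by rw [hR, hRih], hF⟩
      · exact B2.Gm_closed B2.zero_mem_Gm
          ⟨hj', s, Or.inr ⟨rfl, hcl.2⟩, by rw [hR, hcl.1], hF⟩
    have himem : i ∈ Gmem ∨ (i ∉ Gmem ∧ i ≠ 0) := by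
      by_cases him : i ∈ Gmem
      · exact Or.inl him
      · refine Or.inr ⟨him, ?_⟩
        intro hc
        rw [hc] at him
        exact him B2.zero_mem_Gm
    rcases eq_or_lt_of_le hFj with hFj0 | hFjpos
    · rw [← hFj0, zero_div]
      exact div_nonneg hFi (le_of_lt (hvpos i))
    · by_cases htight : R j s = R i s
      · rcases himem with him | ⟨him, hi0⟩
        · have hjm : j ∈ Gmem := hP2 j hj htight hFjpos him
          have hvj : cakeval (f j) (B j) = u j * (1 + η) := hvmem j hj hjm
          by_cases hi0 : i = 0
          · subst hi0
            rw [hvj, hv0]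
            rw [div_mul_eq_div_div, div_mul_eq_div_div]
            have hRj : F j s / u j = R j s := rfl
            have hR0 : F 0 s / u 0 = R 0 s := rfl
            rw [hRj, hR0, ← htight]
            apply div_le_div_of_nonneg_left (le_of_lt ?_) (by linarith) (by linarith)
            exact div_pos hFjpos (hum j)
          · have hvi : cakeval (f i) (B i) = u i * (1 + η) := hvmem i hi0 him
            rw [hvj, hvi, div_mul_eq_div_div, div_mul_eq_div_div]
            have hRj : F j s / u j = R j s := rfl
            have hRi : F i s / u i = R i s := rfl
            rw [hRj, hRi, htight]
        · have hvi : cakeval (f i) (B i) = u i := hvnot i hi0 him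
          rw [hvi]
          calc F j s / cakeval (f j) (B j) ≤ F j s / u j :=
                div_le_div_of_nonneg_left hFj (hum j) (hvge j)
            _ ≤ F i s / u i := by
                have h8 : R j s ≤ R i s := hP1 j hj
                exact h8
      · have hRlt : R j s < R i s := lt_of_le_of_ne (hP1 j hj) htight
        have hRjpos : 0 < R j s := div_pos hFjpos (hum j)
        have hηA2 : η ≤ R i s / R j s - 1 := hηA_le i j s hRjpos hRlt
        have hkey : R j s * (1 + η) ≤ R i s := by
          have h9 := mul_le_mul_of_nonneg_left hηA2 (le_of_lt hRjpos)
          have he : R j s * (R i s / R j s - 1) = R i s - R j s := by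
            field_simp
          nlinarith
        calc F j s / cakeval (f j) (B j) ≤ F j s / u j :=
              div_le_div_of_nonneg_left hFj (hum j) (hvge j)
          _ = R j s := rfl
          _ ≤ R i s / (1 + η) := by
              rw [le_div_iff₀ (by linarith : (0:ℝ) < 1 + η)]
              linarith
          _ = F i s / (u i * (1 + η)) := by
              rw [div_mul_eq_div_div]
          _ ≤ F i s / cakeval (f i) (B i) := by
              apply div_le_div_of_nonneg_left hFi (hvpos i) (hvle i)
  · rw [hvB0]
    nlinarith [hum 0, hηpos]
  · intro i hi
    exact hvge i
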